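/- Let q : [0,1] → ℝ be nonnegative, differentiable and single-barrier with transition point x₀ ∈ [0,1] (i.e. q is monotone increasing on [0,x₀] and monotone decreasing on [x₀,1]), and suppose |q'(x)| ≤ (2/15)·min{q(0), q(1)} for all x ∈ [0,1]. Let 1 ≤ m < n be integers and let z_m, z_n > 0 satisfy φ_q(1, z_m) = mπ and φ_q(1, z_n) = nπ (so λ_m = z_m² and λ_n = z_n² are the m-th and n-th Dirichlet eigenvalues of −y'' + q y = λ y on [0,1]). If z_n > z_m and z_m² ≥ 11·q(x₀), then z_n²/z_m² ≤ n²/m². -/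

import Mathlib

set_option maxHeartbeats 1000000


open Real Set

lemma theta_hasDeriv (q q' φ : ℝ → ℝ) (z : ℝ) (hz : 0 < z) (x : ℝ)
    (hq : HasDerivAt q (q' x) x)
    (hφ : HasDerivAt φ (z - q x / z * Real.sin (φ x) ^ 2) x)
    (hpos : 0 < z ^ 2 - q x) (hqx : 0 ≤ q x) :
    HasDerivAt (fun y => φ y + Real.arctan
        ((Real.sqrt (z ^ 2 - q y) - z) * (Real.sin (φ y) * Real.cos (φ y)) /
          (z * Real.cos (φ y) ^ 2 + Real.sqrt (z ^ 2 - q y) * Real.sin (φ y) ^ 2)))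
      (Real.sqrt (z ^ 2 - q x) - q' x * (Real.sin (φ x) * Real.cos (φ x)) * z /
        (2 * Real.sqrt (z ^ 2 - q x) *
          (z ^ 2 * Real.cos (φ x) ^ 2 + Real.sqrt (z ^ 2 - q x) ^ 2 * Real.sin (φ x) ^ 2))) x := by
  set S := Real.sin (φ x) with hS
  set C := Real.cos (φ x) with hC
  set P := Real.sqrt (z ^ 2 - q x) with hPdef
  have hP2 : P ^ 2 = z ^ 2 - q x := Real.sq_sqrt hpos.le
  have hPpos : 0 < P := Real.sqrt_pos.mpr hpos
  have hP1 : P ≤ z := by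
    have h1 : P ≤ Real.sqrt (z ^ 2) := Real.sqrt_le_sqrt (by linarith)
    rwa [Real.sqrt_sq hz.le] at h1
  have hsc : S ^ 2 + C ^ 2 = 1 := Real.sin_sq_add_cos_sq (φ x)
  have hS1 : S ^ 2 ≤ 1 := by nlinarith [sq_nonneg C]
  have hDpos : 0 < z * C ^ 2 + P * S ^ 2 := by nlinarith [sq_nonneg S, sq_nonneg C]
  have hΔpos : 0 < z ^ 2 * C ^ 2 + P ^ 2 * S ^ 2 := by
    nlinarith [sq_nonneg S, sq_nonneg C, mul_pos hPpos hPpos]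
  have hsub : HasDerivAt (fun y => z ^ 2 - q y) (-q' x) x := hq.const_sub (z ^ 2)
  have hroot : HasDerivAt (fun y => Real.sqrt (z ^ 2 - q y)) (-q' x / (2 * P)) x :=
    hsub.sqrt (ne_of_gt hpos)
  have hsin : HasDerivAt (fun y => Real.sin (φ y)) (C * (z - q x / z * S ^ 2)) x := hφ.sin
  have hcos : HasDerivAt (fun y => Real.cos (φ y)) (-S * (z - q x / z * S ^ 2)) x := hφ.cos
  have hN := (hroot.sub_const z).mul (hsin.mul hcos)
  have hD := ((hcos.pow 2).const_mul z).add (hroot.mul (hsin.pow 2))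
  have hquot := hN.div hD (ne_of_gt hDpos)
  have hall := hφ.add hquot.arctan
  refine hall.congr_deriv ?_
  symm
  have hq_eq : q x = z ^ 2 - P ^ 2 := by linarith
  simp only [Pi.mul_apply, Pi.add_apply, Pi.div_apply, Pi.pow_apply, ← hS, ← hC, ← hPdef]
  rw [hq_eq]
  have hD0 : C ^ 2 * z + P * S ^ 2 ≠ 0 := by nlinarith
  have hΔ0 : C ^ 2 * z ^ 2 + P ^ 2 * S ^ 2 ≠ 0 := by nlinarith
  norm_num
  field_simp
  linear_combination (2 * z ^ 5 * P ^ 2 * S ^ 2 * C ^ 4 + (-2) * z ^ 3 * P ^ 4 * S ^ 2 * C ^ 4 + 2 * z ^ 5 * P ^ 2 * S ^ 4 * C ^ 2 + (-2) * z * P ^ 6 * S ^ 4 * C ^ 2 + 2 * z ^ 3 * P ^ 4 * S ^ 6 + (-2) * z * P ^ 6 * S ^ 6) * hsc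

lemma prufer_key (q q' φ : ℝ → ℝ) (z q₀ b : ℝ) (hz : 0 < z)
    (hqd : ∀ x ∈ Icc (0:ℝ) 1, HasDerivAt q (q' x) x)
    (hqnn : ∀ x ∈ Icc (0:ℝ) 1, 0 ≤ q x)
    (hub : ∀ x ∈ Icc (0:ℝ) 1, q x ≤ q₀)
    (hq₀ : q₀ < z ^ 2)
    (hq'b : ∀ x ∈ Icc (0:ℝ) 1, |q' x| ≤ b)
    (k : ℕ) (hφ0 : φ 0 = 0) (hφ1 : φ 1 = k * π)
    (hODE : ∀ x ∈ Icc (0:ℝ) 1, HasDerivAt φ (z - q x / z * Real.sin (φ x) ^ 2) x) :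
    |(k : ℝ) * π - ∫ t in (0:ℝ)..1, Real.sqrt (z ^ 2 - q (max 0 (min 1 t)))| ≤
      b / (4 * (z ^ 2 - q₀)) := by
  have hIcc : ∀ t : ℝ, max 0 (min 1 t) ∈ Icc (0:ℝ) 1 :=
    fun t => ⟨le_max_left _ _, max_le (by norm_num) (min_le_left _ _)⟩
  have hqc : ContinuousOn q (Icc 0 1) :=
    fun x hx => (hqd x hx).continuousAt.continuousWithinAt
  have hclamp : Continuous fun t : ℝ => max 0 (min 1 t) :=
    continuous_const.max (continuous_const.min continuous_id)
  have hgc : Continuous fun t : ℝ => Real.sqrt (z ^ 2 - q (max 0 (min 1 t))) := by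
    apply Real.continuous_sqrt.comp
    exact continuous_const.sub (hqc.comp_continuous hclamp hIcc)
  set g : ℝ → ℝ := fun t => Real.sqrt (z ^ 2 - q (max 0 (min 1 t))) with hgdef
  set Pint : ℝ → ℝ := fun u => ∫ t in (0:ℝ)..u, g t with hPintdef
  have hPd : ∀ u : ℝ, HasDerivAt Pint (g u) u :=
    fun u => (hgc.integral_hasStrictDerivAt 0 u).hasDerivAt
  set Θ : ℝ → ℝ := fun y => φ y + Real.arctan
      ((Real.sqrt (z ^ 2 - q y) - z) * (Real.sin (φ y) * Real.cos (φ y)) /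
        (z * Real.cos (φ y) ^ 2 + Real.sqrt (z ^ 2 - q y) * Real.sin (φ y) ^ 2)) with hΘdef
  set Θd : ℝ → ℝ := fun x => Real.sqrt (z ^ 2 - q x) -
      q' x * (Real.sin (φ x) * Real.cos (φ x)) * z /
        (2 * Real.sqrt (z ^ 2 - q x) *
          (z ^ 2 * Real.cos (φ x) ^ 2 + Real.sqrt (z ^ 2 - q x) ^ 2 * Real.sin (φ x) ^ 2))
    with hΘddef
  have hpos : ∀ x ∈ Icc (0:ℝ) 1, 0 < z ^ 2 - q x := fun x hx => by
    have := hub x hx; linarith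
  have hΘd : ∀ x ∈ Icc (0:ℝ) 1, HasDerivAt Θ (Θd x) x := fun x hx =>
    theta_hasDeriv q q' φ z hz x (hqd x hx) (hODE x hx) (hpos x hx) (hqnn x hx)
  set B : ℝ := b / (4 * (z ^ 2 - q₀)) with hBdef
  have hb0 : 0 ≤ b := le_trans (abs_nonneg _) (hq'b 0 ⟨le_refl _, by norm_num⟩)
  have hB0 : 0 ≤ B := by
    apply div_nonneg hb0; linarith
  have hbound : ∀ x ∈ Icc (0:ℝ) 1, |Θd x - Real.sqrt (z ^ 2 - q x)| ≤ B := by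
    intro x hx
    set S := Real.sin (φ x)
    set C := Real.cos (φ x)
    set P := Real.sqrt (z ^ 2 - q x) with hPdef
    have hposx := hpos x hx
    have hP2 : P ^ 2 = z ^ 2 - q x := Real.sq_sqrt hposx.le
    have hPpos : 0 < P := Real.sqrt_pos.mpr hposx
    have hP1 : P ≤ z := by
      have h1 : P ≤ Real.sqrt (z ^ 2) := Real.sqrt_le_sqrt (by linarith [hqnn x hx])
      rwa [Real.sqrt_sq hz.le] at h1
    have hΔpos : 0 < z ^ 2 * C ^ 2 + P ^ 2 * S ^ 2 := by
      have hz2 : (0:ℝ) ≤ z ^ 2 - P ^ 2 := by nlinarith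
      have h1 : 0 ≤ (z ^ 2 - P ^ 2) * C ^ 2 := mul_nonneg hz2 (sq_nonneg C)
      have h2 : S ^ 2 + C ^ 2 = 1 := Real.sin_sq_add_cos_sq (φ x)
      nlinarith [mul_pos hPpos hPpos]
    have heq : Θd x - P = -(q' x * (S * C) * z /
        (2 * P * (z ^ 2 * C ^ 2 + P ^ 2 * S ^ 2))) := by
      simp only [hΘddef]; ring
    rw [heq, abs_neg, abs_div]
    have hdenpos : 0 < 2 * P * (z ^ 2 * C ^ 2 + P ^ 2 * S ^ 2) := by positivity
    rw [abs_of_pos hdenpos]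
    have step1 : |q' x * (S * C) * z| / (2 * P * (z ^ 2 * C ^ 2 + P ^ 2 * S ^ 2)) ≤
        |q' x| / (4 * (z ^ 2 - q x)) := by
      rw [div_le_div_iff₀ hdenpos (by linarith)]
      rw [abs_mul, abs_mul, abs_of_pos hz, abs_mul]
      have hSC : |S| * |C| * z * 2 * P ≤ z ^ 2 * C ^ 2 + P ^ 2 * S ^ 2 := by
        nlinarith [sq_nonneg (z * |C| - P * |S|), sq_abs S, sq_abs C,
          abs_nonneg S, abs_nonneg C]
      have h4 : (4 : ℝ) * (z ^ 2 - q x) = 4 * P ^ 2 := by rw [hP2]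
      rw [h4]
      nlinarith [abs_nonneg (q' x), mul_nonneg (mul_nonneg (abs_nonneg S) (abs_nonneg C)) hz.le,
        mul_le_mul_of_nonneg_left hSC (abs_nonneg (q' x)), hPpos]
    refine le_trans step1 ?_
    apply div_le_div₀ hb0 (hq'b x hx) (by linarith [hpos x hx])
    have := hub x hx; linarith
  -- Θ at the endpoints
  have hΘ0 : Θ 0 = 0 := by
    simp [hΘdef, hφ0]
  have hΘ1 : Θ 1 = k * π := by
    have hs : Real.sin (φ 1) = 0 := by rw [hφ1]; exact Real.sin_nat_mul_pi k
    simp [hΘdef, hφ1, hs]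
  -- monotone comparison
  have hmono0 : ∀ F d : ℝ → ℝ, (∀ x ∈ Icc (0:ℝ) 1, HasDerivAt F (d x) x) →
      (∀ x ∈ Ioo (0:ℝ) 1, 0 ≤ d x) → F 0 ≤ F 1 := by
    intro F d hF hd
    have hmono : MonotoneOn F (Icc 0 1) := by
      apply monotoneOn_of_deriv_nonneg (convex_Icc 0 1)
      · exact fun x hx => (hF x hx).continuousAt.continuousWithinAt
      · intro x hx
        rw [interior_Icc] at hx
        exact (hF x (Ioo_subset_Icc_self hx)).differentiableAt.differentiableWithinAt
      · intro x hx
        rw [interior_Icc] at hx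
        rw [(hF x (Ioo_subset_Icc_self hx)).deriv]
        exact hd x hx
    exact hmono (left_mem_Icc.mpr (by norm_num)) (right_mem_Icc.mpr (by norm_num)) (by norm_num)
  have hBy : ∀ x : ℝ, HasDerivAt (fun y : ℝ => B * y) B x := fun x => by
    simpa using (hasDerivAt_id x).const_mul B
  have hgp : ∀ x ∈ Ioo (0:ℝ) 1, g x = Real.sqrt (z ^ 2 - q x) := by
    intro x hx
    rw [hgdef]
    simp only
    rw [min_eq_right hx.2.le, max_eq_right hx.1.le]
  have hL : Θ 0 + (B * 0 - Pint 0) ≤ Θ 1 + (B * 1 - Pint 1) := by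
    apply hmono0 (fun y => Θ y + (B * y - Pint y)) (fun x => Θd x + (B - g x))
    · exact fun x hx => (hΘd x hx).add ((hBy x).sub (hPd x))
    · intro x hx
      have h1 := hbound x (Ioo_subset_Icc_self hx)
      rw [abs_le] at h1
      rw [hgp x hx] at *
      linarith [h1.1]
  have hM : Pint 0 + (B * 0 - Θ 0) ≤ Pint 1 + (B * 1 - Θ 1) := by
    apply hmono0 (fun y => Pint y + (B * y - Θ y)) (fun x => g x + (B - Θd x))
    · exact fun x hx => (hPd x).add ((hBy x).sub (hΘd x hx))
    · intro x hx
      have h1 := hbound x (Ioo_subset_Icc_self hx)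
      rw [abs_le] at h1
      rw [hgp x hx] at *
      linarith [h1.2]
  have hPint0 : Pint 0 = 0 := intervalIntegral.integral_same
  have hPint1 : Pint 1 = ∫ t in (0:ℝ)..1, g t := rfl
  rw [abs_le]
  constructor
  · rw [hΘ0, hΘ1, hPint0] at hM
    have : (∫ t in (0:ℝ)..1, g t) = Pint 1 := rfl
    rw [this]
    linarith
  · rw [hΘ0, hΘ1, hPint0] at hL
    have : (∫ t in (0:ℝ)..1, g t) = Pint 1 := rfl
    rw [this]
    linarith

lemma sqrt_lower_pt (c u zm zn : ℝ) (hzm : 0 < zm) (hzn : 0 < zn)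
    (hu0 : 0 ≤ u) (huc : c ≤ u) (huzm : u < zm ^ 2) (hzsq : zm ^ 2 ≤ zn ^ 2) :
    c * (zn ^ 2 - zm ^ 2) / (2 * zn * zm) ≤
      zm * Real.sqrt (zn ^ 2 - u) - zn * Real.sqrt (zm ^ 2 - u) := by
  set X : ℝ := Real.sqrt (zn ^ 2 - u) with hXdef
  set Y : ℝ := Real.sqrt (zm ^ 2 - u) with hYdef
  have hX2 : X ^ 2 = zn ^ 2 - u := Real.sq_sqrt (by linarith)
  have hY2 : Y ^ 2 = zm ^ 2 - u := Real.sq_sqrt (by linarith)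
  have hX0 : 0 ≤ X := Real.sqrt_nonneg _
  have hY0 : 0 ≤ Y := Real.sqrt_nonneg _
  have hXzn : X ≤ zn := by
    have := Real.sqrt_le_sqrt (show zn ^ 2 - u ≤ zn ^ 2 by linarith)
    rwa [Real.sqrt_sq hzn.le] at this
  have hYzm : Y ≤ zm := by
    have := Real.sqrt_le_sqrt (show zm ^ 2 - u ≤ zm ^ 2 by linarith)
    rwa [Real.sqrt_sq hzm.le] at this
  have hsq : (zm * X) ^ 2 - (zn * Y) ^ 2 = u * (zn ^ 2 - zm ^ 2) := by
    linear_combination zm ^ 2 * hX2 - zn ^ 2 * hY2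
  have hsqle : (zn * Y) ^ 2 ≤ (zm * X) ^ 2 := by
    nlinarith [mul_nonneg hu0 (sub_nonneg.mpr hzsq)]
  have horder : zn * Y ≤ zm * X := by
    nlinarith [mul_nonneg hzm.le hX0, mul_nonneg hzn.le hY0]
  rw [div_le_iff₀ (by positivity)]
  have hT0 : 0 ≤ zm * X - zn * Y := sub_nonneg.mpr horder
  have hsum : zm * X + zn * Y ≤ 2 * zn * zm := by
    have e1 : zm * X ≤ zm * zn := mul_le_mul_of_nonneg_left hXzn hzm.le
    have e2 : zn * Y ≤ zn * zm := mul_le_mul_of_nonneg_left hYzm hzn.le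
    linarith
  have h5 : (zm * X - zn * Y) * (zm * X + zn * Y) = u * (zn ^ 2 - zm ^ 2) := by
    linear_combination hsq
  have h6 : c * (zn ^ 2 - zm ^ 2) ≤ u * (zn ^ 2 - zm ^ 2) :=
    mul_le_mul_of_nonneg_right huc (by linarith)
  have h7 : (zm * X - zn * Y) * (zm * X + zn * Y) ≤
      (zm * X - zn * Y) * (2 * zn * zm) := mul_le_mul_of_nonneg_left hsum hT0
  linarith

lemma sqrt_upper_pt (u Q0 zm zn : ℝ) (hzm : 0 < zm)
    (huQ : u ≤ Q0) (hu0 : 0 ≤ u) (hQzm : Q0 < zm ^ 2) (hzsq : zm ^ 2 ≤ zn ^ 2) :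
    Real.sqrt (zn ^ 2 - u) - Real.sqrt (zm ^ 2 - u) ≤
      (zn ^ 2 - zm ^ 2) / (2 * Real.sqrt (zm ^ 2 - Q0)) := by
  set X : ℝ := Real.sqrt (zn ^ 2 - u) with hXdef
  set Y : ℝ := Real.sqrt (zm ^ 2 - u) with hYdef
  set W : ℝ := Real.sqrt (zm ^ 2 - Q0) with hWdef
  have hX2 : X ^ 2 = zn ^ 2 - u := Real.sq_sqrt (by nlinarith)
  have hY2 : Y ^ 2 = zm ^ 2 - u := Real.sq_sqrt (by nlinarith)
  have hWpos : 0 < W := Real.sqrt_pos.mpr (by linarith)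
  have hWY : W ≤ Y := Real.sqrt_le_sqrt (by linarith)
  have hYX : Y ≤ X := Real.sqrt_le_sqrt (by nlinarith)
  have hY0 : 0 ≤ Y := Real.sqrt_nonneg _
  have h5 : (X - Y) * (X + Y) = zn ^ 2 - zm ^ 2 := by
    linear_combination hX2 - hY2
  rw [le_div_iff₀ (by positivity)]
  have hT0 : 0 ≤ X - Y := sub_nonneg.mpr hYX
  have h7 : (X - Y) * (2 * W) ≤ (X - Y) * (X + Y) :=
    mul_le_mul_of_nonneg_left (by linarith) hT0
  linarith


/-- Upper bound λₙ/λₘ ≤ n²/m² for Schrödinger operators with nonnegative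
single-barrier potentials, when λₘ ≥ 11·q(x₀). -/
theorem ratio_bound_single_barrier
    (q q' : ℝ → ℝ) (x₀ : ℝ) (hx₀ : x₀ ∈ Icc (0:ℝ) 1)
    (hqnonneg : ∀ x ∈ Icc (0:ℝ) 1, 0 ≤ q x)
    (hqdiff : ∀ x ∈ Icc (0:ℝ) 1, HasDerivAt q (q' x) x)
    (hmono : MonotoneOn q (Icc 0 x₀))
    (hanti : AntitoneOn q (Icc x₀ 1))
    (hq'bound : ∀ x ∈ Icc (0:ℝ) 1, |q' x| ≤ (2/15) * min (q 0) (q 1))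
    (m n : ℕ) (hm : 1 ≤ m) (hmn : m < n)
    (zm zn : ℝ) (hzm : 0 < zm) (hzn : 0 < zn)
    (φm φn : ℝ → ℝ)
    (hφm0 : φm 0 = 0)
    (hφmODE : ∀ x ∈ Icc (0:ℝ) 1,
      HasDerivAt φm (zm - q x / zm * Real.sin (φm x) ^ 2) x)
    (hφm1 : φm 1 = m * π)
    (hφn0 : φn 0 = 0)
    (hφnODE : ∀ x ∈ Icc (0:ℝ) 1,
      HasDerivAt φn (zn - q x / zn * Real.sin (φn x) ^ 2) x)
    (hφn1 : φn 1 = n * π)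
    (hgt : zm < zn) (hlam : 11 * q x₀ ≤ zm ^ 2) :
    zn ^ 2 / zm ^ 2 ≤ (n : ℝ) ^ 2 / (m : ℝ) ^ 2 := by
  have h01 : (0:ℝ) ∈ Icc (0:ℝ) 1 := ⟨le_refl _, by norm_num⟩
  have h11 : (1:ℝ) ∈ Icc (0:ℝ) 1 := ⟨by norm_num, le_refl _⟩
  set c : ℝ := min (q 0) (q 1) with hcdef
  set Q0 : ℝ := q x₀ with hQ0def
  set b : ℝ := 2 / 15 * c with hbdef
  have hc0 : 0 ≤ c := le_min (hqnonneg 0 h01) (hqnonneg 1 h11)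
  have hub : ∀ x ∈ Icc (0:ℝ) 1, q x ≤ Q0 := by
    intro x hx
    rcases le_total x x₀ with h | h
    · exact hmono ⟨hx.1, h⟩ ⟨hx₀.1, le_refl _⟩ h
    · exact hanti ⟨le_refl _, hx₀.2⟩ ⟨h, hx.2⟩ h
  have hlb : ∀ x ∈ Icc (0:ℝ) 1, c ≤ q x := by
    intro x hx
    rcases le_total x x₀ with h | h
    · exact le_trans (min_le_left _ _) (hmono ⟨le_refl _, hx₀.1⟩ ⟨hx.1, h⟩ hx.1)
    · exact le_trans (min_le_right _ _) (hanti ⟨h, hx.2⟩ ⟨hx₀.2, le_refl _⟩ hx.2)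
  have hcQ0 : c ≤ Q0 := hlb x₀ hx₀
  have hQ0nn : 0 ≤ Q0 := hqnonneg x₀ hx₀
  have hzm2pos : 0 < zm ^ 2 := pow_pos hzm 2
  have hQ0zm : Q0 < zm ^ 2 := by linarith only [hlam, hQ0nn, hzm2pos]
  have hzmzn2 : zm ^ 2 < zn ^ 2 := by
    have := pow_lt_pow_left₀ hgt hzm.le two_ne_zero
    linarith only [this]
  have hQ0zn : Q0 < zn ^ 2 := lt_trans hQ0zm hzmzn2
  set gm : ℝ → ℝ := fun t => Real.sqrt (zm ^ 2 - q (max 0 (min 1 t))) with hgmdef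
  set gn : ℝ → ℝ := fun t => Real.sqrt (zn ^ 2 - q (max 0 (min 1 t))) with hgndef
  set Am : ℝ := ∫ t in (0:ℝ)..1, gm t with hAmdef
  set An : ℝ := ∫ t in (0:ℝ)..1, gn t with hAndef
  set Bm : ℝ := b / (4 * (zm ^ 2 - Q0)) with hBmdef
  set Bn : ℝ := b / (4 * (zn ^ 2 - Q0)) with hBndef
  have hEm : |(m:ℝ) * π - Am| ≤ Bm :=
    prufer_key q q' φm zm Q0 b hzm hqdiff hqnonneg hub hQ0zm hq'bound m hφm0 hφm1 hφmODE
  have hEn : |(n:ℝ) * π - An| ≤ Bn :=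
    prufer_key q q' φn zn Q0 b hzn hqdiff hqnonneg hub hQ0zn hq'bound n hφn0 hφn1 hφnODE
  -- basic continuity facts
  have hIcc : ∀ t : ℝ, max 0 (min 1 t) ∈ Icc (0:ℝ) 1 :=
    fun t => ⟨le_max_left _ _, max_le (by norm_num) (min_le_left _ _)⟩
  have hqc : ContinuousOn q (Icc 0 1) :=
    fun x hx => (hqdiff x hx).continuousAt.continuousWithinAt
  have hclamp : Continuous fun t : ℝ => max 0 (min 1 t) :=
    continuous_const.max (continuous_const.min continuous_id)
  have hqcl : Continuous fun t : ℝ => q (max 0 (min 1 t)) :=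
    hqc.comp_continuous hclamp hIcc
  have hgmc : Continuous gm := Real.continuous_sqrt.comp (continuous_const.sub hqcl)
  have hgnc : Continuous gn := Real.continuous_sqrt.comp (continuous_const.sub hqcl)
  -- upper bound for Am
  have hAmub : Am ≤ zm := by
    have h1 : ∀ t ∈ Icc (0:ℝ) 1, gm t ≤ zm := by
      intro t _
      rw [hgmdef]
      have h2 : zm ^ 2 - q (max 0 (min 1 t)) ≤ zm ^ 2 := by
        linarith [hqnonneg _ (hIcc t)]
      calc Real.sqrt (zm ^ 2 - q (max 0 (min 1 t))) ≤ Real.sqrt (zm ^ 2) :=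
            Real.sqrt_le_sqrt h2
        _ = zm := Real.sqrt_sq hzm.le
    have h3 := intervalIntegral.integral_mono_on (by norm_num : (0:ℝ) ≤ 1)
      (hgmc.intervalIntegrable 0 1)
      (intervalIntegrable_const : IntervalIntegrable (fun _ => zm) MeasureTheory.volume 0 1) h1
    simpa using h3
  -- key comparison (I): zm * An - zn * Am ≥ c (zn²-zm²)/(2 zn zm)
  have hmain : c * (zn ^ 2 - zm ^ 2) / (2 * zn * zm) ≤ zm * An - zn * Am := by
    have hcomb : zm * An - zn * Am = ∫ t in (0:ℝ)..1, (zm * gn t - zn * gm t) := by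
      rw [intervalIntegral.integral_sub ((hgnc.intervalIntegrable 0 1).const_mul zm)
        ((hgmc.intervalIntegrable 0 1).const_mul zn),
        intervalIntegral.integral_const_mul, intervalIntegral.integral_const_mul]
    rw [hcomb]
    have hpt : ∀ t ∈ Icc (0:ℝ) 1, c * (zn ^ 2 - zm ^ 2) / (2 * zn * zm) ≤
        zm * gn t - zn * gm t := by
      intro t _
      exact sqrt_lower_pt c (q (max 0 (min 1 t))) zm zn hzm hzn
        (hqnonneg _ (hIcc t)) (hlb _ (hIcc t))
        (lt_of_le_of_lt (hub _ (hIcc t)) hQ0zm) hzmzn2.le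
    have h4 := intervalIntegral.integral_mono_on (by norm_num : (0:ℝ) ≤ 1)
      (intervalIntegrable_const :
        IntervalIntegrable (fun _ => c * (zn ^ 2 - zm ^ 2) / (2 * zn * zm)) MeasureTheory.volume 0 1)
      (((continuous_const.mul hgnc).sub (continuous_const.mul hgmc)).intervalIntegrable 0 1) hpt
    simpa using h4
  -- (III) upper bound for the gap
  set W : ℝ := Real.sqrt (zm ^ 2 - Q0) with hWdef
  have hWpos : 0 < W := Real.sqrt_pos.mpr (by linarith)
  have hgapIII : An - Am ≤ (zn ^ 2 - zm ^ 2) / (2 * W) := by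
    have hcombd : An - Am = ∫ t in (0:ℝ)..1, (gn t - gm t) := by
      rw [intervalIntegral.integral_sub (hgnc.intervalIntegrable 0 1)
        (hgmc.intervalIntegrable 0 1)]
    rw [hcombd]
    have hpt2 : ∀ t ∈ Icc (0:ℝ) 1, gn t - gm t ≤ (zn ^ 2 - zm ^ 2) / (2 * W) := by
      intro t _
      exact sqrt_upper_pt (q (max 0 (min 1 t))) Q0 zm zn hzm (hub _ (hIcc t))
        (hqnonneg _ (hIcc t)) hQ0zm hzmzn2.le
    have h4 := intervalIntegral.integral_mono_on (by norm_num : (0:ℝ) ≤ 1)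
      ((hgnc.sub hgmc).intervalIntegrable 0 1)
      (intervalIntegrable_const :
        IntervalIntegrable (fun _ => (zn ^ 2 - zm ^ 2) / (2 * W)) MeasureTheory.volume 0 1) hpt2
    simpa using h4
  -- numeric bounds on the error terms
  have hb0 : 0 ≤ b := mul_nonneg (by norm_num) hc0
  have hQ011 : Q0 ≤ zm ^ 2 / 11 := by linarith
  have hden_m : 10 / 11 * zm ^ 2 ≤ zm ^ 2 - Q0 := by linarith
  have hden_n : zm ^ 2 - Q0 ≤ zn ^ 2 - Q0 := by linarith
  have hBm300 : Bm ≤ 1 / 300 := by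
    rw [hBmdef, div_le_iff₀ (by linarith)]
    have hcz : c ≤ zm ^ 2 / 11 := le_trans hcQ0 hQ011
    rw [hbdef]
    linarith
  have hBn300 : Bn ≤ 1 / 300 := by
    rw [hBndef, div_le_iff₀ (by linarith)]
    have hcz : c ≤ zm ^ 2 / 11 := le_trans hcQ0 hQ011
    rw [hbdef]
    linarith
  have hBm0 : 0 ≤ Bm := div_nonneg hb0 (by linarith)
  have hBn0 : 0 ≤ Bn := div_nonneg hb0 (by linarith)
  obtain ⟨hEm1, hEm2⟩ := abs_le.mp hEm
  obtain ⟨hEn1, hEn2⟩ := abs_le.mp hEn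
  have hm1 : (1:ℝ) ≤ (m:ℝ) := by exact_mod_cast hm
  have hn_ge : (m:ℝ) + 1 ≤ (n:ℝ) := by exact_mod_cast hmn
  have hπ : (3.141592 : ℝ) < π := Real.pi_gt_d6
  have hπm : π ≤ (m:ℝ) * π := le_mul_of_one_le_left Real.pi_pos.le hm1
  have hzm_lb : (3.138 : ℝ) ≤ zm := by linarith
  have hAgap : π - 1 / 150 ≤ An - Am := by
    have h1 : (m:ℝ) * π + π ≤ (n:ℝ) * π := by
      have := mul_le_mul_of_nonneg_right hn_ge Real.pi_pos.le
      linarith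
    linarith
  -- the bracket inequality
  have hbr : 11 * zn ^ 2 ≤ 75 * zm * (zn ^ 2 - zm ^ 2) := by
    by_cases hcase : (21 / 20 : ℝ) * zm ^ 2 ≤ zn ^ 2
    · have h1 : zn ^ 2 / 21 ≤ zn ^ 2 - zm ^ 2 := by linarith
      have h2 : 75 * zm * (zn ^ 2 / 21) ≤ 75 * zm * (zn ^ 2 - zm ^ 2) :=
        mul_le_mul_of_nonneg_left h1 (by positivity)
      have h3 : (3.138 : ℝ) * zn ^ 2 ≤ zm * zn ^ 2 :=
        mul_le_mul_of_nonneg_right hzm_lb (sq_nonneg zn)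
      linarith only [h2, h3, sq_nonneg zn]
    · push_neg at hcase
      have hWlb : (0.95 : ℝ) * zm ≤ W := by
        rw [hWdef]
        apply Real.le_sqrt_of_sq_le
        linarith only [hQ011, sq_nonneg zm]
      have h2W : (π - 1 / 150) * (2 * W) ≤ zn ^ 2 - zm ^ 2 := by
        rw [← le_div_iff₀ (by positivity)]
        linarith
      have hπ150 : (0:ℝ) ≤ 150 * zm * (π - 1 / 150) := by
        apply mul_nonneg (by positivity)
        linarith
      have e4 : (0.95 * zm) * (150 * zm * (π - 1 / 150)) ≤ W * (150 * zm * (π - 1 / 150)) :=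
        mul_le_mul_of_nonneg_right hWlb hπ150
      have e2 : 75 * zm * ((π - 1 / 150) * (2 * W)) ≤ 75 * zm * (zn ^ 2 - zm ^ 2) :=
        mul_le_mul_of_nonneg_left h2W (by positivity)
      have e5 : (3.141592 : ℝ) * zm ^ 2 ≤ π * zm ^ 2 :=
        mul_le_mul_of_nonneg_right hπ.le (sq_nonneg zm)
      linarith only [e2, e4, e5, hcase, sq_nonneg zm, sq_nonneg zn]
  -- error comparison
  have herr : zm * Bn + zn * Bm ≤ zn * b / (2 * (zm ^ 2 - Q0)) := by
    have h1 : zm * Bn ≤ zn * Bm := by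
      rw [hBmdef, hBndef, ← mul_div_assoc, ← mul_div_assoc,
        div_le_div_iff₀ (by linarith) (by linarith)]
      have h0 : zm * (zm ^ 2 - Q0) ≤ zn * (zn ^ 2 - Q0) := by
        have e1 : zm * (zm ^ 2 - Q0) ≤ zn * (zm ^ 2 - Q0) :=
          mul_le_mul_of_nonneg_right hgt.le (by linarith)
        have e2 : zn * (zm ^ 2 - Q0) ≤ zn * (zn ^ 2 - Q0) :=
          mul_le_mul_of_nonneg_left (by linarith) hzn.le
        linarith only [e1, e2]
      linarith only [mul_le_mul_of_nonneg_left h0 (mul_nonneg (by norm_num : (0:ℝ) ≤ 4) hb0)]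
    have h2 : zn * Bm = zn * b / (4 * (zm ^ 2 - Q0)) := by rw [hBmdef]; ring
    have h3 : 2 * (zn * b / (4 * (zm ^ 2 - Q0))) = zn * b / (2 * (zm ^ 2 - Q0)) := by
      have hne : zm ^ 2 - Q0 ≠ 0 := by linarith
      field_simp
      ring
    linarith
  have herr2 : zn * b / (2 * (zm ^ 2 - Q0)) ≤ c * (zn ^ 2 - zm ^ 2) / (2 * zn * zm) := by
    rw [div_le_div_iff₀ (by linarith) (by positivity), hbdef]
    have hkey : 11 * zn ^ 2 * (c * zm) ≤ 75 * zm * (zn ^ 2 - zm ^ 2) * (c * zm) :=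
      mul_le_mul_of_nonneg_right hbr (mul_nonneg hc0 hzm.le)
    have hprod : c * (zn ^ 2 - zm ^ 2) * (10 / 11 * zm ^ 2) ≤
        c * (zn ^ 2 - zm ^ 2) * (zm ^ 2 - Q0) :=
      mul_le_mul_of_nonneg_left hden_m (mul_nonneg hc0 (by linarith))
    linarith only [hkey, hprod]
  -- final assembly
  have l1 : An - Bn ≤ (n:ℝ) * π := by linarith
  have l2 : (m:ℝ) * π ≤ Am + Bm := by linarith
  have l3 : zm * (An - Bn) ≤ zm * ((n:ℝ) * π) := mul_le_mul_of_nonneg_left l1 hzm.le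
  have l4 : zn * ((m:ℝ) * π) ≤ zn * (Am + Bm) := mul_le_mul_of_nonneg_left l2 hzn.le
  have hstep : zn * ((m:ℝ) * π) ≤ zm * ((n:ℝ) * π) := by
    linarith only [l3, l4, hmain, herr, herr2]
  have hfinal : (m:ℝ) * zn ≤ (n:ℝ) * zm := by
    have h := (mul_le_mul_iff_left₀ Real.pi_pos).mp
      (show (m:ℝ) * zn * π ≤ (n:ℝ) * zm * π by linarith only [hstep])
    exact h
  have hmpos : (0:ℝ) < (m:ℝ) := by linarith
  rw [div_le_div_iff₀ hzm2pos (by positivity)]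
  linarith only [mul_le_mul hfinal hfinal (mul_nonneg hmpos.le hzn.le)
    (mul_nonneg (by linarith : (0:ℝ) ≤ (n:ℝ)) hzm.le)]
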